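/- With notation as in the standardized-sum bound, if 0 < m < n, the bound sqrt(m(n-m)) is attained by a subset S of size m if and only if all x_i with i ∈ S have a common value and all x_i with i ∉ S have a common value, namely x_i = μ + s·sqrt((n-m)/m)·σ for i ∈ S and x_i = μ - s·sqrt(m/(n-m))·σ for i ∉ S, for some s ∈ {-1,1}. -/

import Mathlib

/-- Equality case of the standardized-sum bound: for `0 < m < n`, the bound `√(m(n-m))`
is attained by a subset `S` of size `m` iff there is a sign `s ∈ {-1,1}` such that
`x i = μ + s·√((n-m)/m)·σ` for `i ∈ S` and `x i = μ - s·√(m/(n-m))·σ` for `i ∉ S`. -/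
theorem standardized_sum_bound_eq_iff (n : ℕ) (x : Fin n → ℝ) (μ σ : ℝ)
    (hμ : μ = (∑ i, x i) / n)
    (hσdef : σ = Real.sqrt ((∑ i, (x i - μ) ^ 2) / n))
    (hσ : 0 < σ)
    (S : Finset (Fin n)) (m : ℕ) (hm : S.card = m) (hm0 : 0 < m) (hmn : m < n) :
    |∑ i ∈ S, (x i - μ) / σ| = Real.sqrt (m * (n - m)) ↔
      ∃ s : ℝ, (s = 1 ∨ s = -1) ∧
        (∀ i ∈ S, x i = μ + s * Real.sqrt (((n : ℝ) - m) / m) * σ) ∧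
        (∀ i ∉ S, x i = μ - s * Real.sqrt ((m : ℝ) / ((n : ℝ) - m)) * σ) := by
  have hσ0 : σ ≠ 0 := ne_of_gt hσ
  have hn0 : 0 < n := lt_trans hm0 hmn
  have hnR : (0:ℝ) < n := by exact_mod_cast hn0
  have hmR : (0:ℝ) < m := by exact_mod_cast hm0
  have hnmR : (0:ℝ) < (n:ℝ) - m := by
    have : (m:ℝ) < n := by exact_mod_cast hmn
    linarith
  -- key sqrt identities
  have hsq1 : (m:ℝ) * Real.sqrt (((n : ℝ) - m) / m) = Real.sqrt ((m:ℝ) * ((n:ℝ) - m)) := by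
    rw [show (m:ℝ) = Real.sqrt ((m:ℝ)^2) by rw [Real.sqrt_sq hmR.le],
      ← Real.sqrt_mul (by positivity)]
    congr 1
    field_simp
    rw [Real.sqrt_sq hmR.le]
  have hsq2 : ((n:ℝ) - m) * Real.sqrt ((m:ℝ) / ((n:ℝ) - m)) = Real.sqrt ((m:ℝ) * ((n:ℝ) - m)) := by
    rw [show ((n:ℝ) - m) = Real.sqrt (((n:ℝ)-m)^2) by rw [Real.sqrt_sq hnmR.le],
      ← Real.sqrt_mul (by positivity)]
    congr 1
    field_simp
    rw [Real.sq_sqrt (by nlinarith [sq_nonneg ((n:ℝ) - m)])]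
  constructor
  · -- forward direction
    intro hEq
    set y : Fin n → ℝ := fun i => (x i - μ) / σ with hy
    set T : ℝ := ∑ i ∈ S, y i with hT
    have hsum0 : ∑ i, (x i - μ) = 0 := by
      have : ∑ i, (x i - μ) = (∑ i, x i) - n * μ := by
        rw [Finset.sum_sub_distrib, Finset.sum_const, Finset.card_univ, Fintype.card_fin,
          nsmul_eq_mul]
      rw [this, hμ]; field_simp; ring
    have hysum0 : ∑ i, y i = 0 := by
      simp only [hy, ← Finset.sum_div, hsum0, zero_div]
    have hsumsq : ∑ i, (x i - μ)^2 = n * σ^2 := by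
      have h1 : σ^2 = (∑ i, (x i - μ)^2) / n := by
        rw [hσdef, Real.sq_sqrt (by positivity)]
      rw [h1]; field_simp
    have hysumsq : ∑ i, (y i)^2 = n := by
      have : ∀ i, (y i)^2 = (x i - μ)^2 / σ^2 := fun i => by
        simp [hy, div_pow]
      simp only [this, ← Finset.sum_div, hsumsq]
      field_simp
    have hT2 : T^2 = (m:ℝ) * ((n:ℝ) - m) := by
      have := hEq
      have h1 : T^2 = |T|^2 := (sq_abs T).symm
      rw [h1, hEq, Real.sq_sqrt (by positivity)]
    have hcompl : ∑ i ∈ Sᶜ, y i = -T := by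
      have := Finset.sum_add_sum_compl S y
      rw [hysum0] at this
      linarith
    have hcardc : (Sᶜ.card : ℝ) = (n:ℝ) - m := by
      rw [Finset.card_compl, Fintype.card_fin, hm, Nat.cast_sub hmn.le]
    have key : ∀ (F : Finset (Fin n)) (a : ℝ),
        ∑ i ∈ F, (y i - a)^2
          = ∑ i ∈ F, (y i)^2 - 2*a*(∑ i ∈ F, y i) + F.card * a^2 := by
      intro F a
      rw [Finset.sum_congr rfl
        (fun i _ => (by ring : (y i - a)^2 = y i^2 - 2*a* y i + a^2))]
      rw [Finset.sum_add_distrib, Finset.sum_sub_distrib, ← Finset.mul_sum,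
        Finset.sum_const, nsmul_eq_mul]
    set a : ℝ := T / m with ha
    set b : ℝ := -T / ((n:ℝ) - m) with hb
    have h1 : ∑ i ∈ S, (y i - a)^2 = ∑ i ∈ S, (y i)^2 - T^2 / m := by
      rw [key S a, hm, ha, ← hT]
      field_simp
      ring
    have h2 : ∑ i ∈ Sᶜ, (y i - b)^2 = ∑ i ∈ Sᶜ, (y i)^2 - T^2 / ((n:ℝ) - m) := by
      rw [key Sᶜ b, hcompl, hcardc, hb]
      field_simp
      ring
    have htot : ∑ i ∈ S, (y i)^2 + ∑ i ∈ Sᶜ, (y i)^2 = n := by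
      rw [Finset.sum_add_sum_compl S (fun i => (y i)^2), hysumsq]
    have hzero : ∑ i ∈ S, (y i - a)^2 + ∑ i ∈ Sᶜ, (y i - b)^2 = 0 := by
      rw [h1, h2]
      have : T^2 / m + T^2 / ((n:ℝ) - m) = n := by
        rw [hT2]; field_simp; ring
      linarith
    have hS0 : ∑ i ∈ S, (y i - a)^2 = 0 := by
      have hA : 0 ≤ ∑ i ∈ S, (y i - a)^2 := Finset.sum_nonneg fun i _ => sq_nonneg _
      have hB : 0 ≤ ∑ i ∈ Sᶜ, (y i - b)^2 := Finset.sum_nonneg fun i _ => sq_nonneg _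
      linarith
    have hC0 : ∑ i ∈ Sᶜ, (y i - b)^2 = 0 := by
      have hA : 0 ≤ ∑ i ∈ S, (y i - a)^2 := Finset.sum_nonneg fun i _ => sq_nonneg _
      linarith
    have hyS : ∀ i ∈ S, y i = a := by
      intro i hi
      have := (Finset.sum_eq_zero_iff_of_nonneg (fun i _ => sq_nonneg (y i - a))).1 hS0 i hi
      have := pow_eq_zero_iff (n := 2) (by norm_num) |>.1 this
      linarith
    have hyC : ∀ i ∈ Sᶜ, y i = b := by
      intro i hi
      have := (Finset.sum_eq_zero_iff_of_nonneg (fun i _ => sq_nonneg (y i - b))).1 hC0 i hi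
      have := pow_eq_zero_iff (n := 2) (by norm_num) |>.1 this
      linarith
    -- choose sign
    have habsT : |T| = Real.sqrt ((m:ℝ) * ((n:ℝ) - m)) := hEq
    rcases abs_eq (Real.sqrt_nonneg _) |>.1 habsT with hTpos | hTneg
    · refine ⟨1, Or.inl rfl, ?_, ?_⟩
      · intro i hi
        have hyi := hyS i hi
        have hai : a = Real.sqrt (((n:ℝ) - m) / m) := by
          rw [ha, hTpos, ← hsq1]; field_simp
        have h : (x i - μ) / σ = Real.sqrt (((n:ℝ) - m) / m) := by rw [← hai, ← hyi]
        have := (div_eq_iff hσ0).1 h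
        linarith
      · intro i hi
        have hyi := hyC i (Finset.mem_compl.2 hi)
        have hbi : b = -Real.sqrt ((m:ℝ) / ((n:ℝ) - m)) := by
          rw [hb, hTpos, ← hsq2]; field_simp
        have h : (x i - μ) / σ = -Real.sqrt ((m:ℝ) / ((n:ℝ) - m)) := by rw [← hbi, ← hyi]
        have := (div_eq_iff hσ0).1 h
        linarith
    · refine ⟨-1, Or.inr rfl, ?_, ?_⟩
      · intro i hi
        have hyi := hyS i hi
        have hai : a = -Real.sqrt (((n:ℝ) - m) / m) := by
          rw [ha, hTneg, ← hsq1]; field_simp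
        have h : (x i - μ) / σ = -Real.sqrt (((n:ℝ) - m) / m) := by rw [← hai, ← hyi]
        have := (div_eq_iff hσ0).1 h
        linarith
      · intro i hi
        have hyi := hyC i (Finset.mem_compl.2 hi)
        have hbi : b = Real.sqrt ((m:ℝ) / ((n:ℝ) - m)) := by
          rw [hb, hTneg, ← hsq2]; field_simp
        have h : (x i - μ) / σ = Real.sqrt ((m:ℝ) / ((n:ℝ) - m)) := by rw [← hbi, ← hyi]
        have := (div_eq_iff hσ0).1 h
        linarith
  · -- backward direction
    rintro ⟨s, hs, hin, hout⟩
    have habs : |s| = 1 := by rcases hs with h | h <;> simp [h]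
    have hval : ∀ i ∈ S, (x i - μ) / σ = s * Real.sqrt (((n:ℝ) - m) / m) := by
      intro i hi
      rw [hin i hi, div_eq_iff hσ0]
      ring
    have hsum : ∑ i ∈ S, (x i - μ) / σ = (m:ℝ) * (s * Real.sqrt (((n:ℝ) - m) / m)) := by
      rw [Finset.sum_congr rfl hval, Finset.sum_const, hm, nsmul_eq_mul]
    rw [hsum, abs_mul, abs_mul, habs, Nat.abs_cast, one_mul,
      abs_of_nonneg (Real.sqrt_nonneg _), hsq1]
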